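/- If G is a bipartite simple graph of order n, then Mo(G) ≤ Σ_{uv∈E(G)} (n − 2·min{d_G(u), d_G(v)}), i.e., for every edge uv of G one has |n_G(u,v) − n_G(v,u)| ≤ n − 2·min{d_G(u), d_G(v)}. -/

import Mathlib

/-- `nG G u v` is the number of vertices of `G` whose distance to `u` is strictly
smaller than their distance to `v` (vertices at infinite distance to both `u` and `v`
are counted for neither, since the extended distance `⊤` is not `< ⊤`). -/
noncomputable def nG {V : Type*} [Fintype V] (G : SimpleGraph V) (u v : V) : ℕ :=
  Set.ncard {w : V | G.edist w u < G.edist w v}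

/-- The Mostar index `Mo(G) = ∑_{uv ∈ E(G)} |nG(u,v) - nG(v,u)|` of a finite simple graph. -/
noncomputable def mostar {V : Type*} [Fintype V] (G : SimpleGraph V) : ℤ :=
  ∑ e ∈ (Set.toFinite G.edgeSet).toFinset,
    Sym2.lift ⟨fun u v => |(nG G u v : ℤ) - (nG G v u : ℤ)|, fun _ _ => abs_sub_comm _ _⟩ e

/-- In a bipartite graph, for an edge `uv`, the set counted by `nG G u v` contains `u`
together with all neighbors of `u` other than `v`, hence has at least `deg u` elements. -/
lemma nG_lower {V : Type*} [Fintype V] [DecidableEq V] (G : SimpleGraph V) [DecidableRel G.Adj]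
    (hbip : G.Colorable 2) {u v : V} (huv : G.Adj u v) :
    G.degree u ≤ nG G u v := by
  classical
  obtain ⟨c⟩ := hbip
  have hsub : insert u (G.neighborSet u \ {v}) ⊆ {w : V | G.edist w u < G.edist w v} := by
    rintro w (rfl | ⟨hadj, hne⟩)
    · simp only [Set.mem_setOf_eq, SimpleGraph.edist_self]
      rw [SimpleGraph.edist_eq_one_iff_adj.mpr huv]
      exact zero_lt_one
    · simp only [SimpleGraph.mem_neighborSet] at hadj
      have hne' : w ≠ v := hne
      have h1 : G.edist w u = 1 := SimpleGraph.edist_eq_one_iff_adj.mpr hadj.symm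
      have hnadj : ¬ G.Adj w v := by
        intro h
        have e1 := c.valid huv
        have e2 := c.valid hadj
        have e3 := c.valid h
        have := (c u).isLt; have := (c v).isLt; have := (c w).isLt
        have v1 : (c u).val ≠ (c v).val := fun h => e1 (Fin.ext h)
        have v2 : (c u).val ≠ (c w).val := fun h => e2 (Fin.ext h)
        have v3 : (c w).val ≠ (c v).val := fun h => e3 (Fin.ext h)
        omega
      have h0 : G.edist w v ≠ 0 := SimpleGraph.edist_eq_zero_iff.ne.mpr hne'
      have hone : G.edist w v ≠ 1 := fun h => hnadj (SimpleGraph.edist_eq_one_iff_adj.mp h)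
      have : (1 : ℕ∞) ≤ G.edist w v := ENat.one_le_iff_ne_zero.mpr h0
      simp only [Set.mem_setOf_eq, h1]
      exact lt_of_le_of_ne this (Ne.symm hone)
  have hcard : (insert u (G.neighborSet u \ {v})).ncard = G.degree u := by
    have hu : u ∉ G.neighborSet u \ {v} := by
      simp [SimpleGraph.irrefl]
    rw [Set.ncard_insert_of_notMem hu (Set.toFinite _),
      Set.ncard_diff_singleton_of_mem (by simpa using huv : v ∈ G.neighborSet u)]
    have hns : (G.neighborSet u).ncard = G.degree u := by
      rw [Set.ncard_eq_toFinset_card', Set.toFinset_card]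
      exact SimpleGraph.card_neighborSet_eq_degree G u
    have hpos : 1 ≤ G.degree u := by
      rw [← SimpleGraph.card_neighborFinset_eq_degree]
      exact Finset.card_pos.mpr ⟨v, by simpa using huv⟩
    omega
  calc G.degree u = (insert u (G.neighborSet u \ {v})).ncard := hcard.symm
    _ ≤ nG G u v := Set.ncard_le_ncard hsub (Set.toFinite _)

/-- The two sets counted by `nG G u v` and `nG G v u` are disjoint, hence their
cardinalities sum to at most the order of the graph. -/
lemma nG_add {V : Type*} [Fintype V] (G : SimpleGraph V) (n : ℕ) (hn : Fintype.card V = n)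
    (u v : V) : nG G u v + nG G v u ≤ n := by
  classical
  have hdisj : Disjoint {w : V | G.edist w u < G.edist w v}
      {w : V | G.edist w v < G.edist w u} := by
    rw [Set.disjoint_left]
    intro w h1 h2
    simp only [Set.mem_setOf_eq] at h1 h2
    exact lt_asymm h1 h2
  rw [nG, nG, ← Set.ncard_union_eq hdisj (Set.toFinite _) (Set.toFinite _)]
  calc _ ≤ (Set.univ : Set V).ncard := Set.ncard_le_ncard (Set.subset_univ _) (Set.toFinite _)
    _ = n := by rw [Set.ncard_univ, Nat.card_eq_fintype_card, hn]

/-- If `G` is bipartite of order `n`, then for every edge `uv` one has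
`|nG(u,v) - nG(v,u)| ≤ n - 2·min{d(u), d(v)}`, and consequently
`Mo(G) ≤ ∑_{uv ∈ E(G)} (n - 2·min{d(u), d(v)})`. -/
theorem mostar_bipartite_le_degree_sum {V : Type*} [Fintype V] [DecidableEq V]
    (G : SimpleGraph V) [DecidableRel G.Adj] (n : ℕ) (hn : Fintype.card V = n)
    (hbip : G.Colorable 2) :
    (∀ u v : V, G.Adj u v →
      |(nG G u v : ℤ) - (nG G v u : ℤ)| ≤ (n : ℤ) - 2 * min (G.degree u : ℤ) (G.degree v : ℤ)) ∧
    mostar G ≤ ∑ e ∈ G.edgeFinset,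
      Sym2.lift ⟨fun u v => (n : ℤ) - 2 * min (G.degree u : ℤ) (G.degree v : ℤ),
        fun u v => by dsimp only; rw [min_comm]⟩ e := by
  have key : ∀ u v : V, G.Adj u v →
      |(nG G u v : ℤ) - (nG G v u : ℤ)| ≤ (n : ℤ) - 2 * min (G.degree u : ℤ) (G.degree v : ℤ) := by
    intro u v huv
    have h1 : (G.degree u : ℤ) ≤ (nG G u v : ℤ) := by exact_mod_cast nG_lower G hbip huv
    have h2 : (G.degree v : ℤ) ≤ (nG G v u : ℤ) := by exact_mod_cast nG_lower G hbip huv.symm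
    have h3 : (nG G u v : ℤ) + (nG G v u : ℤ) ≤ (n : ℤ) := by exact_mod_cast nG_add G n hn u v
    rw [abs_le]
    omega
  refine ⟨key, ?_⟩
  rw [mostar, Set.Finite.toFinset_eq_toFinset]
  refine Finset.sum_le_sum fun e he => ?_
  induction e using Sym2.ind with
  | _ u v =>
    rw [Set.mem_toFinset, SimpleGraph.mem_edgeSet] at he
    simpa using key u v he
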